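/- Let b ≥ 2 be an integer, X ∈ ℝ^{N×(Kg)} an activation matrix whose columns are partitioned into K contiguous groups of size g with submatrices X^{(k)} ∈ ℝ^{N×g}, and W ∈ ℝ^{(Kg)×C_out} a weight matrix. For each output channel j and group k, let W^{(k,j)} ∈ ℝ^g be the subvector of column j of W on the rows of group k, and assume ‖W^{(k,j)}‖_∞ > 0 for all k, j. Let Q(W) be the group-wise symmetric uniform quantization of W, obtained by quantizing each subvector W^{(k,j)} with bit-width b and scale ‖W^{(k,j)}‖_∞/(2^{b−1} − 1). Then the layer-wise quantization error satisfies ‖X W − X Q(W)‖_F ≤ (√g / (2(2^{b−1} − 1))) · Σ_{j=1}^{C_out} Σ_{k=1}^{K} ‖X^{(k)}‖_F · ‖W^{(k,j)}‖_∞. (Theorem 4.2, Activation-Weight Coupled Error Bound.) -/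

import Mathlib

open Finset in
lemma aux_minkowski {ι κ : Type*} [Fintype ι] [Fintype κ] (f : ι → κ → ℝ) :
    Real.sqrt (∑ t, (∑ m, f m t) ^ 2) ≤ ∑ m, Real.sqrt (∑ t, (f m t) ^ 2) := by
  have hnorm : ∀ v : EuclideanSpace ℝ κ, ‖v‖ = Real.sqrt (∑ t, (v t) ^ 2) := by
    intro v
    rw [EuclideanSpace.norm_eq]
    congr 1
    exact Finset.sum_congr rfl fun t _ => sq_abs (v t)
  set v : ι → EuclideanSpace ℝ κ := fun m => (WithLp.equiv 2 _).symm (f m) with hv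
  have hsum : (∑ m, v m) = (WithLp.equiv 2 (κ → ℝ)).symm (fun t => ∑ m, f m t) := by
    ext t
    simp [hv]
  calc Real.sqrt (∑ t, (∑ m, f m t) ^ 2) = ‖∑ m, v m‖ := by
        rw [hsum, hnorm]; simp
      _ ≤ ∑ m, ‖v m‖ := norm_sum_le _ _
      _ = ∑ m, Real.sqrt (∑ t, (f m t) ^ 2) := by
        exact Finset.sum_congr rfl fun m _ => hnorm (v m)

/-- **Theorem 4.2 (Activation-Weight Coupled Error Bound).**
Let `b ≥ 2`, `X ∈ ℝ^{N×(K·g)}` an activation matrix with columns partitioned into `K`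
contiguous groups of size `g` (indexed by `Fin K × Fin g`), and `W ∈ ℝ^{(K·g)×C_out}` a
weight matrix. For each output channel `j` and group `k`, `W^(k,j) = fun i => W (k, i) j`
is the corresponding subvector (with `‖·‖` the sup norm on `Fin g → ℝ`), assumed nonzero.
Let `Q` be the group-wise symmetric uniform quantization of `W` with bit-width `b` and
scales `s k j = ‖W^(k,j)‖_∞ / (2^(b-1) - 1)`. Then the layer-wise quantization error
satisfies
`‖X W - X Q‖_F ≤ (√g / (2 (2^(b-1) - 1))) Σ_j Σ_k ‖X^(k)‖_F ‖W^(k,j)‖_∞`. -/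
theorem activation_weight_coupled_error_bound
    (N K g Cout b : ℕ) (hb : 2 ≤ b)
    (X : Matrix (Fin N) (Fin K × Fin g) ℝ)
    (W : Matrix (Fin K × Fin g) (Fin Cout) ℝ)
    (hW : ∀ (k : Fin K) (j : Fin Cout), 0 < ‖(fun i : Fin g => W (k, i) j)‖)
    (s : Fin K → Fin Cout → ℝ)
    (hs : ∀ k j, s k j = ‖(fun i : Fin g => W (k, i) j)‖ / (2 ^ (b - 1) - 1))
    (Q : Matrix (Fin K × Fin g) (Fin Cout) ℝ)
    (hQ : ∀ (k : Fin K) (i : Fin g) (j : Fin Cout),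
      Q (k, i) j = s k j *
        ((min (max (round (W (k, i) j / s k j)) (-(2 ^ (b - 1)) : ℤ))
            ((2 ^ (b - 1) - 1 : ℤ)) : ℤ) : ℝ)) :
    Real.sqrt (∑ n, ∑ j, ((X * W) n j - (X * Q) n j) ^ 2) ≤
      Real.sqrt g / (2 * ((2 : ℝ) ^ (b - 1) - 1)) *
        ∑ j : Fin Cout, ∑ k : Fin K,
          Real.sqrt (∑ n, ∑ i, (X n (k, i)) ^ 2) * ‖(fun i : Fin g => W (k, i) j)‖ := by
  classical
  have h2M : (2:ℝ) ≤ 2 ^ (b-1) := by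
    calc (2:ℝ) = 2^1 := (pow_one 2).symm
    _ ≤ 2^(b-1) := pow_le_pow_right₀ one_le_two (by omega)
  set M : ℝ := 2 ^ (b - 1) - 1 with hM
  have hMpos : 0 < M := by rw [hM]; linarith
  -- entrywise error bound
  have habs : ∀ k i j, |W (k,i) j - Q (k,i) j| ≤ s k j / 2 := by
    intro k i j
    have hwn := hW k j
    have hspos : 0 < s k j := by rw [hs]; exact div_pos hwn hMpos
    have hxb : |W (k,i) j / s k j| ≤ M := by
      rw [abs_div, abs_of_pos hspos, div_le_iff₀ hspos, hs, mul_comm,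
        div_mul_cancel₀ _ hMpos.ne']
      simpa using norm_le_pi_norm (fun i : Fin g => W (k,i) j) i
    set x := W (k,i) j / s k j with hx
    have hr1 := abs_sub_round x
    have hcast : (((2:ℤ)^(b-1) : ℤ) : ℝ) = 2^(b-1) := by push_cast; ring
    have hub : round x ≤ (2:ℤ)^(b-1) - 1 := by
      have h1 : ((round x : ℤ) : ℝ) < (((2:ℤ)^(b-1) : ℤ) : ℝ) := by
        rw [hcast]
        have := (abs_le.1 hr1).1
        have := (abs_le.1 hxb).2
        rw [hM] at *
        linarith
      have h2 : round x < (2:ℤ)^(b-1) := by exact_mod_cast h1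
      omega
    have hlb : (-((2:ℤ)^(b-1)) : ℤ) ≤ round x := by
      have h1 : ((-((2:ℤ)^(b-1)) : ℤ) : ℝ) < ((round x : ℤ) : ℝ) := by
        push_cast
        have := (abs_le.1 hr1).2
        have := (abs_le.1 hxb).1
        rw [hM] at *
        linarith
      have h2 : (-((2:ℤ)^(b-1)) : ℤ) < round x := by exact_mod_cast h1
      exact h2.le
    have hclamp : min (max (round x) (-(2^(b-1)) : ℤ)) ((2^(b-1)-1 : ℤ)) = round x := by
      rw [max_eq_left hlb, min_eq_left hub]
    rw [hQ k i j]
    rw [show round (W (k, i) j / s k j) = round x from rfl, hclamp]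
    have heq : W (k,i) j - s k j * round x = s k j * (x - round x) := by
      rw [hx]; field_simp
    rw [heq, abs_mul, abs_of_pos hspos]
    calc s k j * |x - round x| ≤ s k j * (1/2) :=
          mul_le_mul_of_nonneg_left hr1 hspos.le
      _ = s k j / 2 := by ring
  -- main chain
  set E : (Fin K × Fin g) → Fin Cout → ℝ := fun p j => W p j - Q p j with hE
  set f : (Fin Cout × Fin K) → (Fin N × Fin Cout) → ℝ :=
    fun m t => if m.1 = t.2 then ∑ i, X t.1 (m.2, i) * E (m.2, i) t.2 else 0 with hf
  have hrw : (∑ t : Fin N × Fin Cout, (∑ m, f m t)^2)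
      = ∑ n, ∑ j, ((X*W) n j - (X*Q) n j)^2 := by
    rw [Fintype.sum_prod_type]
    refine Finset.sum_congr rfl fun n _ => Finset.sum_congr rfl fun j _ => ?_
    congr 1
    rw [Fintype.sum_prod_type, Finset.sum_comm]
    have hcol : ∀ k : Fin K, (∑ j' : Fin Cout, f (j', k) (n, j))
        = ∑ i, X n (k, i) * E (k, i) j := by
      intro k
      simp only [hf]
      rw [Finset.sum_ite_eq' Finset.univ j (fun _ => ∑ i, X n (k, i) * E (k, i) j)]
      simp
    rw [Finset.sum_congr rfl fun k _ => hcol k]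
    simp only [Matrix.mul_apply, hE, mul_sub, Fintype.sum_prod_type,
      Finset.sum_sub_distrib]
  rw [← hrw]
  refine le_trans (aux_minkowski f) ?_
  rw [Fintype.sum_prod_type, Finset.mul_sum]
  refine Finset.sum_le_sum fun j _ => ?_
  rw [Finset.mul_sum]
  refine Finset.sum_le_sum fun k _ => ?_
  have hspos : 0 < s k j := by rw [hs]; exact div_pos (hW k j) hMpos
  have h1 : (∑ t : Fin N × Fin Cout, (f (j,k) t)^2)
      = ∑ n, (∑ i, X n (k,i) * E (k,i) j)^2 := by
    rw [Fintype.sum_prod_type]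
    refine Finset.sum_congr rfl fun n _ => ?_
    simp [hf, apply_ite (· ^ 2), Finset.sum_ite_eq]
  rw [h1]
  have hXnn : (0:ℝ) ≤ ∑ n, ∑ i, X n (k,i)^2 := by positivity
  have hsum : (∑ n, (∑ i, X n (k,i) * E (k,i) j)^2)
      ≤ (∑ n, ∑ i, X n (k,i)^2) * (∑ i, E (k,i) j ^2) := by
    rw [Finset.sum_mul]
    exact Finset.sum_le_sum fun n _ =>
      Finset.sum_mul_sq_le_sq_mul_sq _ _ _
  have hEbound : (∑ i, E (k,i) j ^ 2) ≤ g * (s k j / 2)^2 := by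
    calc ∑ i, E (k,i) j^2 ≤ ∑ _i : Fin g, (s k j / 2)^2 := by
          refine Finset.sum_le_sum fun i _ => ?_
          have h := habs k i j
          have : |E (k,i) j| ≤ s k j / 2 := h
          calc E (k,i) j ^2 = |E (k,i) j|^2 := (sq_abs _).symm
            _ ≤ (s k j / 2)^2 := pow_le_pow_left₀ (abs_nonneg _) this 2
      _ = g * (s k j/2)^2 := by
          rw [Finset.sum_const, Finset.card_univ, Fintype.card_fin, nsmul_eq_mul]
  have hchain : (∑ n, (∑ i, X n (k,i) * E (k,i) j)^2)
      ≤ (∑ n, ∑ i, X n (k,i)^2) * (g * (s k j / 2)^2) :=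
    le_trans hsum (mul_le_mul_of_nonneg_left hEbound hXnn)
  calc Real.sqrt (∑ n, (∑ i, X n (k,i) * E (k,i) j)^2)
      ≤ Real.sqrt ((∑ n, ∑ i, X n (k,i)^2) * (g * (s k j / 2)^2)) :=
        Real.sqrt_le_sqrt hchain
    _ = Real.sqrt (∑ n, ∑ i, X n (k,i)^2) * (Real.sqrt g * (s k j / 2)) := by
        rw [Real.sqrt_mul hXnn, Real.sqrt_mul (by positivity : (0:ℝ) ≤ (g:ℝ)),
          Real.sqrt_sq (by positivity : (0:ℝ) ≤ s k j / 2)]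
    _ = Real.sqrt g / (2 * M) *
        (Real.sqrt (∑ n, ∑ i, X n (k,i)^2) * ‖(fun i : Fin g => W (k, i) j)‖) := by
        rw [hs]
        field_simp
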